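/- Soundness with respect to relations for the signature {∘, 1, D}: for any {∘, 1, D}-terms s and t over variables Σ, if ⟨s⟩ = ⟨t⟩ then for every set X and every assignment f of binary relations on X to the variables, the relational interpretations of s and t under f coincide. -/

import Mathlib

inductive PreTree (α : Type) : Type
  | node : Bool → List (α × PreTree α) → PreTree α

namespace PreTree

variable {α : Type}

def mark : PreTree α → Bool
  | node b _ => b

def children : PreTree α → List (α × PreTree α)
  | node _ cs => cs

def le : PreTree α → PreTree α → Prop
  | node b₁ c₁, node b₂ c₂ =>
      (b₂ = true → b₁ = true) ∧
      ∀ q, q ∈ c₂ → ∃ p, p ∈ c₁ ∧ p.1 = q.1 ∧ le p.2 q.2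
termination_by _ t₂ => sizeOf t₂
decreasing_by
  have h := List.sizeOf_lt_of_mem ‹q ∈ c₂›
  obtain ⟨qa, qt⟩ := q
  simp at h ⊢
  omega

-- The reduced form of a tree: reduce all child subtrees, then for each
-- label keep only the `≤`-minimal attached subtrees.
open scoped Classical in
noncomputable def reduce : PreTree α → PreTree α
  | node b cs =>
      let cs' : List (α × PreTree α) := cs.attach.map fun p => (p.1.1, reduce p.1.2)
      node b (cs'.filter fun q =>
        decide (∀ q' ∈ cs', q'.1 = q.1 → le q'.2 q.2 → le q.2 q'.2))
termination_by t => sizeOf t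
decreasing_by
  have h := List.sizeOf_lt_of_mem p.2
  obtain ⟨⟨pa, pt⟩, hp⟩ := p
  simp at h ⊢
  omega

/-- A tree is reduced if it equals its reduced form. -/
def Reduced (T : PreTree α) : Prop := reduce T = T

/-- The number of marked (point) vertices of a tree. -/
def markCount : PreTree α → ℕ
  | node b cs => (cond b 1 0) + (cs.attach.map fun p => markCount p.1.2).sum
termination_by t => sizeOf t
decreasing_by
  have h := List.sizeOf_lt_of_mem p.2
  obtain ⟨⟨pa, pt⟩, hp⟩ := p
  simp at h ⊢
  omega

/-- A pointed tree: exactly one vertex is marked as the point. -/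
def Pointed (T : PreTree α) : Prop := markCount T = 1

/-- Remove all point marks. -/
def unmark : PreTree α → PreTree α
  | node _ cs => node false (cs.attach.map fun p => (p.1.1, unmark p.1.2))
termination_by t => sizeOf t
decreasing_by
  have h := List.sizeOf_lt_of_mem p.2
  obtain ⟨⟨pa, pt⟩, hp⟩ := p
  simp at h ⊢
  omega

/-- Graft the tree `S` onto the point of `T` (identifying the point of `T`
with the root of `S`); the marks of `S` determine the new point. -/
def graft (S : PreTree α) : PreTree α → PreTree α
  | node b cs =>
      if b then node S.mark (cs ++ S.children)
      else node b (cs.attach.map fun p => (p.1.1, graft S p.1.2))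
termination_by t => sizeOf t
decreasing_by
  have h := List.sizeOf_lt_of_mem p.2
  obtain ⟨⟨pa, pt⟩, hp⟩ := p
  simp at h ⊢
  omega

/-- Move the point of `T` to its root. -/
def pointAtRoot (T : PreTree α) : PreTree α := node true (unmark T).children

/-- Pointed tree concatenation `T ∘ S`. -/
noncomputable def concat (T S : PreTree α) : PreTree α := reduce (graft S T)

/-- The domain operation `D(T)` on pointed trees. -/
noncomputable def domTree (T : PreTree α) : PreTree α := reduce (pointAtRoot T)

/-- The trivial pointed tree: one vertex, both root and point. -/
def trivialTree : PreTree α := node true []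

/-- The two-vertex pointed tree with a single `a`-labelled edge, point at the child. -/
def arrow (a : α) : PreTree α := node false [(a, node true [])]


/-- Set-theoretic equality of trees (children lists regarded as sets). -/
def eqv : PreTree α → PreTree α → Prop
  | node b₁ c₁, node b₂ c₂ =>
      b₁ = b₂ ∧
      (∀ p, p ∈ c₁ → ∃ q, q ∈ c₂ ∧ p.1 = q.1 ∧ eqv p.2 q.2) ∧
      (∀ q, q ∈ c₂ → ∃ p : {x // x ∈ c₁}, p.1.1 = q.1 ∧ eqv p.1.2 q.2)
termination_by t₁ _ => sizeOf t₁
decreasing_by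
  · have h₁ := List.sizeOf_lt_of_mem ‹p ∈ c₁›
    obtain ⟨pa, pt⟩ := p
    simp at h₁ ⊢
    omega
  · have h₁ := List.sizeOf_lt_of_mem p.2
    obtain ⟨⟨pa, pt⟩, hp⟩ := p
    simp at h₁ ⊢
    omega


/-- The subtree of `T` at position `p` (a list of child indices), if it exists. -/
def subAt : List ℕ → PreTree α → Option (PreTree α)
  | [], t => some t
  | i :: is, node _ cs => (cs[i]?).bind fun p => subAt is p.2

/-- `p` is a vertex of `T`. -/
def IsVertex (T : PreTree α) (p : List ℕ) : Prop := ∃ t, subAt p T = some t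

/-- The vertex `p` of `T` is the point (is marked). -/
def IsPoint (T : PreTree α) (p : List ℕ) : Prop :=
  ∃ t, subAt p T = some t ∧ t.mark = true

/-- There is an `a`-labelled edge of `T` from vertex `p` (the parent) to
vertex `q` (the child). -/
def Edge (T : PreTree α) (a : α) (p q : List ℕ) : Prop :=
  ∃ c, subAt p T = some c ∧ ∃ i t, c.children[i]? = some (a, t) ∧ q = p ++ [i]

theorem root_isVertex (T : PreTree α) : IsVertex T [] := ⟨T, rfl⟩

/-- A homomorphism of pointed labelled rooted trees from `S` to `T`:
a map of vertices preserving the labelled edge relations, sending the root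
to the root and points to points. -/
def HomTree (S T : PreTree α) : Prop :=
  ∃ θ : List ℕ → List ℕ,
    θ [] = [] ∧
    (∀ p, IsVertex S p → IsVertex T (θ p)) ∧
    (∀ a p q, Edge S a p q → Edge T a (θ p) (θ q)) ∧
    (∀ p, IsPoint S p → IsPoint T (θ p))

/-- A homomorphism of the pointed tree `T`, viewed as a relational structure,
into the relational structure `(X, f)`, mapping the root of `T` to `x` and
the point of `T` to `y`. -/
def HomInto {X : Type} (T : PreTree α) (f : α → X → X → Prop) (x y : X) : Prop :=
  ∃ θ : List ℕ → X,
    θ [] = x ∧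
    (∀ a p q, Edge T a p q → f a (θ p) (θ q)) ∧
    (∀ p, IsPoint T p → θ p = y)


end PreTree

namespace FreeKAD

/-- Terms of the signature `{∘, 1, D}`. -/
inductive Term1 (α : Type) : Type
  | var : α → Term1 α
  | one : Term1 α
  | comp : Term1 α → Term1 α → Term1 α
  | dom : Term1 α → Term1 α

/-- Terms of the signature `{∘, +, *, 0, 1, D}` (Kleene algebra with domain). -/
inductive TermK (α : Type) : Type
  | var : α → TermK α
  | zero : TermK α
  | one : TermK α
  | comp : TermK α → TermK α → TermK α
  | add : TermK α → TermK α → TermK α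
  | star : TermK α → TermK α
  | dom : TermK α → TermK α

variable {α : Type}

/-- The relational interpretation of a `{∘, 1, D}`-term over a set `X`,
under an assignment `f` of binary relations on `X` to the variables. -/
def rinterp1 {X : Type} (f : α → X → X → Prop) : Term1 α → X → X → Prop
  | .var a => f a
  | .one => fun x y => x = y
  | .comp s t => fun x y => ∃ z, rinterp1 f s x z ∧ rinterp1 f t z y
  | .dom s => fun x y => x = y ∧ ∃ z, rinterp1 f s x z

/-- The relational interpretation of a `{∘, +, *, 0, 1, D}`-term over a set `X`,
under an assignment `f` of binary relations on `X` to the variables. -/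
def rinterpK {X : Type} (f : α → X → X → Prop) : TermK α → X → X → Prop
  | .var a => f a
  | .zero => fun _ _ => False
  | .one => fun x y => x = y
  | .comp s t => fun x y => ∃ z, rinterpK f s x z ∧ rinterpK f t z y
  | .add s t => fun x y => rinterpK f s x y ∨ rinterpK f t x y
  | .star s => Relation.ReflTransGen (rinterpK f s)
  | .dom s => fun x y => x = y ∧ ∃ z, rinterpK f s x z

/-- Composition of binary relations. -/
def relComp {X : Type} (R S : X → X → Prop) : X → X → Prop :=
  fun x y => ∃ z, R x z ∧ S z y

/-- Union of binary relations. -/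
def relUnion {X : Type} (R S : X → X → Prop) : X → X → Prop :=
  fun x y => R x y ∨ S x y

/-- The domain operation on binary relations. -/
def relDom {X : Type} (R : X → X → Prop) : X → X → Prop :=
  fun x y => x = y ∧ ∃ z, R x z

/-- The identity relation. -/
def relId {X : Type} : X → X → Prop := fun x y => x = y

/-- The empty relation. -/
def relEmpty {X : Type} : X → X → Prop := fun _ _ => False

end FreeKAD

namespace FreeKAD

open PreTree

variable {α : Type}

/-- The single-tree interpretation of `{∘, 1, D}`-terms. -/
noncomputable def interp1 : Term1 α → PreTree α
  | .var a => arrow a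
  | .one => trivialTree
  | .comp s t => concat (interp1 s) (interp1 t)
  | .dom s => domTree (interp1 s)

/-- The set of `≤`-maximal elements of a set of trees. -/
def maximalSet (K : Set (PreTree α)) : Set (PreTree α) :=
  {T | T ∈ K ∧ ∀ S ∈ K, le T S → le S T}

/-- Elementwise lifting of pointed tree concatenation to sets of trees. -/
def liftComp (K L : Set (PreTree α)) : Set (PreTree α) :=
  {U | ∃ T ∈ K, ∃ S ∈ L, U = concat T S}

/-- Elementwise lifting of the domain operation to sets of trees. -/
def liftDom (K : Set (PreTree α)) : Set (PreTree α) :=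
  {U | ∃ T ∈ K, U = domTree T}

/-- Iterated lifted concatenation: `K^0 = {trivial}`, `K^(i+1) = K^i ∘ K`. -/
def powC (K : Set (PreTree α)) : ℕ → Set (PreTree α)
  | 0 => {trivialTree}
  | i + 1 => liftComp (powC K i) K

/-- The standard tree interpretation of `{∘, +, *, 0, 1, D}`-terms. -/
def sinterp : TermK α → Set (PreTree α)
  | .var a => {arrow a}
  | .zero => ∅
  | .one => {trivialTree}
  | .comp s t => maximalSet (liftComp (sinterp s) (sinterp t))
  | .add s t => maximalSet (sinterp s ∪ sinterp t)
  | .star s => maximalSet (⋃ i : ℕ, powC (sinterp s) (i + 1))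
  | .dom s => maximalSet (liftDom (sinterp s))

/-- Equality of sets of trees, with trees compared as (hereditarily finite) sets. -/
def SetEqv (K L : Set (PreTree α)) : Prop :=
  (∀ T ∈ K, ∃ S ∈ L, eqv T S) ∧ (∀ S ∈ L, ∃ T ∈ K, eqv T S)

/-- A set of reduced pointed trees is regular if it is the standard tree
interpretation of some `{∘, +, *, 0, 1, D}`-term. -/
def Regular (L : Set (PreTree α)) : Prop := ∃ t : TermK α, L = sinterp t

/-- The set of reduced trees lying `≤`-below some member of `L`. -/
def down (L : Set (PreTree α)) : Set (PreTree α) :=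
  {T | Reduced T ∧ ∃ S ∈ L, le T S}

end FreeKAD

namespace PreTree
variable {α : Type}

theorem sizeOf_lt_of_mem_children {b : Bool} {cs : List (α × PreTree α)} {p : α × PreTree α}
    (h : p ∈ cs) : sizeOf p.2 < sizeOf (node b cs) := by
  have h := List.sizeOf_lt_of_mem h
  obtain ⟨pa, pt⟩ := p
  simp at h ⊢
  omega

theorem strongRecOn {motive : PreTree α → Prop}
    (T : PreTree α)
    (ih : ∀ T, (∀ S : PreTree α, sizeOf S < sizeOf T → motive S) → motive T) : motive T :=
  ih T (fun S _ => strongRecOn S ih)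
termination_by sizeOf T

theorem attach_map_pair {β : Type*} (cs : List (α × PreTree α)) (g : PreTree α → β) :
    (cs.attach.map fun p => (p.1.1, g p.1.2)) = cs.map fun p => (p.1, g p.2) :=
  List.attach_map_val (l := cs) (f := fun p => (p.1, g p.2))

theorem markCount_node (b : Bool) (cs : List (α × PreTree α)) :
    markCount (node b cs) = (cond b 1 0) + (cs.map fun p => markCount p.2).sum := by
  rw [markCount]
  congr 1
  exact congrArg List.sum (List.attach_map_val (l := cs) (f := fun p => markCount p.2))

theorem unmark_node (b : Bool) (cs : List (α × PreTree α)) :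
    unmark (node b cs) = node false (cs.map fun p => (p.1, unmark p.2)) := by
  rw [unmark]; rw [attach_map_pair]

open scoped Classical in
theorem reduce_node (b : Bool) (cs : List (α × PreTree α)) :
    reduce (node b cs) = node b (((cs.map fun p => (p.1, reduce p.2))).filter
      (fun q => decide (∀ q' ∈ cs.map (fun p => (p.1, reduce p.2)), q'.1 = q.1 → le q'.2 q.2 → le q.2 q'.2))) := by
  rw [reduce]
  rw [attach_map_pair]

theorem graft_node (S : PreTree α) (b : Bool) (cs : List (α × PreTree α)) :
    graft S (node b cs) = if b then node S.mark (cs ++ S.children)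
      else node b (cs.map fun p => (p.1, graft S p.2)) := by
  rw [graft, attach_map_pair]
def Pint {X : Type} (f : α → X → X → Prop) : PreTree α → X → X → Prop
  | node b cs => fun x y => (b = true → x = y) ∧
      ∀ p ∈ cs, ∃ z, f p.1 x z ∧ Pint f p.2 z y
termination_by t => sizeOf t
decreasing_by
  exact sizeOf_lt_of_mem_children ‹_›

theorem Pint_node {X : Type} (f : α → X → X → Prop) (b : Bool) (cs : List (α × PreTree α))
    (x y : X) : Pint f (node b cs) x y ↔ ((b = true → x = y) ∧
      ∀ p ∈ cs, ∃ z, f p.1 x z ∧ Pint f p.2 z y) := by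
  rw [Pint]

theorem le_node {b₁ b₂ : Bool} {c₁ c₂ : List (α × PreTree α)} :
    le (node b₁ c₁) (node b₂ c₂) ↔
      ((b₂ = true → b₁ = true) ∧
      ∀ q, q ∈ c₂ → ∃ p, p ∈ c₁ ∧ p.1 = q.1 ∧ le p.2 q.2) := by
  rw [le]

theorem le_reflP : ∀ T : PreTree α, le T T := by
  intro T
  induction T using strongRecOn with
  | ih T ih =>
    obtain ⟨b, cs⟩ := T
    rw [le_node]
    exact ⟨fun h => h, fun q hq => ⟨q, hq, rfl, ih q.2 (sizeOf_lt_of_mem_children hq)⟩⟩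

theorem le_transP : ∀ C A B : PreTree α, le A B → le B C → le A C := by
  intro C
  induction C using strongRecOn with
  | ih C ih =>
    intro A B hab hbc
    obtain ⟨b₁, c₁⟩ := A; obtain ⟨b₂, c₂⟩ := B; obtain ⟨b₃, c₃⟩ := C
    rw [le_node] at hab hbc ⊢
    refine ⟨fun h => hab.1 (hbc.1 h), fun q hq => ?_⟩
    obtain ⟨p, hp, hp1, hp2⟩ := hbc.2 q hq
    obtain ⟨r, hr, hr1, hr2⟩ := hab.2 p hp
    exact ⟨r, hr, hr1.trans hp1, ih q.2 (sizeOf_lt_of_mem_children hq) r.2 p.2 hr2 hp2⟩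

theorem le_Pint {X : Type} (f : α → X → X → Prop) :
    ∀ B A : PreTree α, le A B → ∀ x y, Pint f A x y → Pint f B x y := by
  intro B
  induction B using strongRecOn with
  | ih B ih =>
    intro A hle x y hP
    obtain ⟨b₁, c₁⟩ := A; obtain ⟨b₂, c₂⟩ := B
    rw [le_node] at hle
    rw [Pint_node] at hP ⊢
    refine ⟨fun h => hP.1 (hle.1 h), fun q hq => ?_⟩
    obtain ⟨p, hp, hp1, hp2⟩ := hle.2 q hq
    obtain ⟨z, hz, hz2⟩ := hP.2 p hp
    exact ⟨z, hp1 ▸ hz, ih q.2 (sizeOf_lt_of_mem_children hq) p.2 hp2 z y hz2⟩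

theorem exists_maximal (l : List (α × PreTree α)) (q : α × PreTree α) :
    ∃ m : α × PreTree α, (m = q ∨ m ∈ l) ∧ (m.1 = q.1 ∧ le m.2 q.2) ∧
      ∀ q' ∈ l, q'.1 = m.1 → le q'.2 m.2 → le m.2 q'.2 := by
  induction l generalizing q with
  | nil => exact ⟨q, Or.inl rfl, ⟨rfl, le_reflP q.2⟩, by simp⟩
  | cons a l ih =>
    obtain ⟨m, hm, ⟨hm1, hm2⟩, hmax⟩ := ih q
    by_cases hc : a.1 = m.1 ∧ le a.2 m.2 ∧ ¬ le m.2 a.2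
    · obtain ⟨m', hm', ⟨hm'1, hm'2⟩, hmax'⟩ := ih a
      refine ⟨m', ?_, ⟨by rw [hm'1, hc.1, hm1], le_transP _ _ _ (le_transP _ _ _ hm'2 hc.2.1) hm2⟩,
        ?_⟩
      · rcases hm' with h | h
        · exact Or.inr (h ▸ List.mem_cons_self (a := a) (l := l))
        · exact Or.inr (List.mem_cons_of_mem a h)
      · intro q' hq' h1 h2
        rcases List.mem_cons.1 hq' with h | h
        · subst h; exact hm'2
        · exact hmax' q' h h1 h2
    · push_neg at hc
      refine ⟨m, ?_, ⟨hm1, hm2⟩, ?_⟩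
      · rcases hm with h | h
        · exact Or.inl h
        · exact Or.inr (List.mem_cons_of_mem a h)
      · intro q' hq' h1 h2
        rcases List.mem_cons.1 hq' with h | h
        · subst h; exact hc h1 h2
        · exact hmax q' h h1 h2

open scoped Classical in
theorem Pint_reduce {X : Type} (f : α → X → X → Prop) :
    ∀ (T : PreTree α) (x y : X), Pint f (reduce T) x y ↔ Pint f T x y := by
  intro T
  induction T using strongRecOn with
  | ih T ih =>
    obtain ⟨b, cs⟩ := T
    intro x y
    rw [reduce_node]
    set cs' : List (α × PreTree α) := cs.map fun p => (p.1, reduce p.2) with hcs'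
    rw [Pint_node, Pint_node]
    constructor
    · rintro ⟨h1, h2⟩
      refine ⟨h1, fun p hp => ?_⟩
      have hq : (p.1, reduce p.2) ∈ cs' := List.mem_map.2 ⟨p, hp, rfl⟩
      obtain ⟨m, hm, ⟨hm1, hm2⟩, hmax⟩ := exists_maximal cs' (p.1, reduce p.2)
      have hm' : m ∈ cs' := hm.elim (fun h => h ▸ hq) id
      have hmf : m ∈ cs'.filter
          (fun q => decide (∀ q' ∈ cs', q'.1 = q.1 → le q'.2 q.2 → le q.2 q'.2)) := by
        rw [List.mem_filter]
        exact ⟨hm', decide_eq_true_iff.2 hmax⟩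
      obtain ⟨z, hz1, hz2⟩ := h2 m hmf
      have : Pint f (reduce p.2) z y := le_Pint f _ _ hm2 z y hz2
      exact ⟨z, by rwa [hm1] at hz1, (ih p.2 (sizeOf_lt_of_mem_children hp) z y).1 this⟩
    · rintro ⟨h1, h2⟩
      refine ⟨h1, fun q hq => ?_⟩
      have hq' : q ∈ cs' := (List.mem_filter.1 hq).1
      obtain ⟨p, hp, hpq⟩ := List.mem_map.1 hq'
      obtain ⟨z, hz1, hz2⟩ := h2 p hp
      subst hpq
      exact ⟨z, hz1, (ih p.2 (sizeOf_lt_of_mem_children hp) z y).2 hz2⟩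

theorem nat_mem_map_le_sum {β : Type*} {l : List β} {f : β → ℕ} {p : β} (h : p ∈ l) :
    f p ≤ (l.map f).sum := by
  induction l with
  | nil => simp at h
  | cons a l ih =>
    rcases List.mem_cons.1 h with h | h
    · subst h; simp
    · simp only [List.map_cons, List.sum_cons]
      exact le_add_of_nonneg_of_le (Nat.zero_le _) (ih h)

theorem nat_sum_map_zero {β : Type*} {l : List β} {f : β → ℕ} (h : (l.map f).sum = 0) :
    ∀ p ∈ l, f p = 0 := by
  induction l with
  | nil => simp
  | cons a l ih =>
    simp only [List.map_cons, List.sum_cons] at h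
    intro p hp
    rcases List.mem_cons.1 hp with h' | h'
    · subst h'; omega
    · exact ih (by omega) p h'

theorem sum_map_eq_one {β : Type*} {l : List β} {f : β → ℕ} (h : (l.map f).sum = 1) :
    ∃ q ∈ l, f q = 1 ∧ ∀ p ∈ l, f p = 0 ∨ p = q := by
  induction l with
  | nil => simp at h
  | cons a l ih =>
    simp only [List.map_cons, List.sum_cons] at h
    by_cases ha : f a = 0
    · obtain ⟨q, hq, hq1, hq2⟩ := ih (by omega)
      refine ⟨q, List.mem_cons_of_mem a hq, hq1, fun p hp => ?_⟩
      rcases List.mem_cons.1 hp with h' | h'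
      · subst h'; exact Or.inl ha
      · exact hq2 p h'
    · have ha1 : f a = 1 := by omega
      have hl : (l.map f).sum = 0 := by omega
      refine ⟨a, List.mem_cons_self (a := a) (l := l), ha1, fun p hp => ?_⟩
      rcases List.mem_cons.1 hp with h' | h'
      · exact Or.inr h'
      · exact Or.inl (nat_sum_map_zero hl p h')

theorem two_mem_sum {β : Type*} {l : List β} {f : β → ℕ} {q q' : β} (h : q ∈ l) (h' : q' ∈ l)
    (hne : q ≠ q') (h1 : 1 ≤ f q) (h2 : 1 ≤ f q') : 2 ≤ (l.map f).sum := by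
  induction l with
  | nil => simp at h
  | cons a l ih =>
    simp only [List.map_cons, List.sum_cons]
    rcases List.mem_cons.1 h with ha | ha
    · subst ha
      have : q' ∈ l := (List.mem_cons.1 h').resolve_left (fun e => hne e.symm)
      have := nat_mem_map_le_sum (f := f) this
      omega
    · rcases List.mem_cons.1 h' with hb | hb
      · subst hb
        have := nat_mem_map_le_sum (f := f) ha
        omega
      · have := ih ha hb
        omega

theorem le_markCount : ∀ B A : PreTree α, le A B → 1 ≤ markCount B → 1 ≤ markCount A := by
  intro B
  induction B using strongRecOn with
  | ih B ih =>
    intro A hle hmc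
    obtain ⟨b₁, c₁⟩ := A; obtain ⟨b₂, c₂⟩ := B
    rw [le_node] at hle
    rw [markCount_node] at hmc ⊢
    rcases b₂ with _ | _
    · simp only [cond_false, Nat.zero_add] at hmc
      -- some child of c₂ has markCount ≥ 1
      by_contra hcon
      push_neg at hcon
      have h0 : ∀ p ∈ c₂, ¬ (1 ≤ markCount p.2) := by
        intro p hp hp1
        obtain ⟨r, hr, hr1, hr2⟩ := hle.2 p hp
        have h4 := ih p.2 (sizeOf_lt_of_mem_children hp) r.2 hr2 hp1
        have h5 : markCount r.2 ≤ (c₁.map fun p => markCount p.2).sum := by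
          have := nat_mem_map_le_sum (f := fun p => markCount p.2) hr
          simpa using this
        omega
      have : ((c₂.map fun p => markCount p.2)).sum = 0 := by
        by_contra hs
        have h1 : 1 ≤ ((c₂.map fun p => markCount p.2)).sum := by omega
        -- find a child with positive count
        have : ∃ p ∈ c₂, 1 ≤ markCount p.2 := by
          by_contra hno
          push_neg at hno
          have : ∀ x ∈ c₂.map fun p => markCount p.2, x = 0 := by
            intro x hx
            obtain ⟨p, hp, rfl⟩ := List.mem_map.1 hx
            have := hno p hp
            omega
          have := List.sum_eq_zero this
          omega
        obtain ⟨p, hp, hp1⟩ := this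
        exact h0 p hp hp1
      omega
    · have : b₁ = true := hle.1 rfl
      subst this
      simp

theorem sum_map_eq_single {β : Type*} {l : List β} {f g : β → ℕ} {q : β} {c : ℕ}
    (h : (l.map f).sum = 1) (hq : q ∈ l) (hfq : f q = 1)
    (h0 : ∀ p ∈ l, p ≠ q → g p = 0) (hgq : g q = c) : (l.map g).sum = c := by
  induction l with
  | nil => simp at hq
  | cons a l ih =>
    simp only [List.map_cons, List.sum_cons] at h ⊢
    by_cases ha : a = q
    · subst ha
      have hrest : (l.map f).sum = 0 := by omega
      have : (l.map g).sum = 0 := by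
        apply List.sum_eq_zero
        intro x hx
        obtain ⟨p, hp, rfl⟩ := List.mem_map.1 hx
        by_cases hpq : p = a
        · exfalso
          have := nat_sum_map_zero hrest p hp
          rw [hpq] at this; omega
        · exact h0 p (List.mem_cons_of_mem a hp) hpq
      rw [this, hgq]; omega
    · have hql : q ∈ l := (List.mem_cons.1 hq).resolve_left (fun e => ha e.symm)
      have h1 : 1 ≤ (l.map f).sum := le_trans (by omega) (nat_mem_map_le_sum hql)
      have hfa : f a = 0 := by omega
      have hga : g a = 0 := h0 a (List.mem_cons_self (a := a) (l := l)) ha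
      rw [hga, ih (by omega) hql (fun p hp => h0 p (List.mem_cons_of_mem a hp))]
      omega

open scoped Classical in
theorem markCount_reduce : ∀ T : PreTree α, markCount T ≤ 1 →
    markCount (reduce T) = markCount T := by
  intro T
  induction T using strongRecOn with
  | ih T ih =>
    intro hT
    obtain ⟨b, cs⟩ := T
    rw [markCount_node] at hT
    rw [reduce_node, markCount_node, markCount_node]
    set cs' : List (α × PreTree α) := cs.map fun p => (p.1, reduce p.2) with hcs'
    have hsum : (cs'.map fun p => markCount p.2).sum = (cs.map fun p => markCount p.2).sum := by
      rw [hcs', List.map_map]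
      refine congrArg List.sum (List.map_congr_left ?_)
      intro p hp
      have hb : markCount p.2 ≤ (cs.map fun p => markCount p.2).sum := by
        have := nat_mem_map_le_sum (f := fun p => markCount p.2) hp
        simpa using this
      exact ih p.2 (sizeOf_lt_of_mem_children hp) (by omega)
    set flt : List (α × PreTree α) := cs'.filter
      (fun q => decide (∀ q' ∈ cs', q'.1 = q.1 → le q'.2 q.2 → le q.2 q'.2)) with hflt
    have hsub : (flt.map fun p => markCount p.2).sum ≤ (cs'.map fun p => markCount p.2).sum :=
      List.Sublist.sum_le_sum (List.Sublist.map _ (List.filter_sublist (l := cs'))) (fun a _ => Nat.zero_le a)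
    rcases Nat.eq_zero_or_pos ((cs.map fun p => markCount p.2).sum) with hz | hpos
    · omega
    · have hs1 : ((cs.map fun p => markCount p.2).sum) = 1 := by omega
      have hs1' : ((cs'.map fun p => markCount p.2).sum) = 1 := by omega
      obtain ⟨q, hq, hq1, hq2⟩ := sum_map_eq_one hs1'
      have hpred : ∀ q' ∈ cs', q'.1 = q.1 → le q'.2 q.2 → le q.2 q'.2 := by
        intro q' hq' hlab hle
        by_contra hn
        have hne : q ≠ q' := by
          intro e; rw [← e] at hn; exact hn (le_reflP q.2)
        have h1' : 1 ≤ markCount q'.2 := le_markCount q.2 q'.2 hle (show 1 ≤ markCount q.2 by omega)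
        have := two_mem_sum (f := fun p => markCount p.2) hq hq' hne (show 1 ≤ markCount q.2 by omega) (show 1 ≤ markCount q'.2 from h1')
        omega
      have hqf : q ∈ flt := by
        rw [hflt, List.mem_filter]
        exact ⟨hq, decide_eq_true_iff.2 hpred⟩
      have : markCount q.2 ≤ (flt.map fun p => markCount p.2).sum := by
        have := nat_mem_map_le_sum (f := fun p => markCount p.2) hqf
        simpa using this
      omega

theorem markCount_unmark : ∀ T : PreTree α, markCount (unmark T) = 0 := by
  intro T
  induction T using strongRecOn with
  | ih T ih =>
    obtain ⟨b, cs⟩ := T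
    rw [unmark_node, markCount_node, List.map_map]
    simp only [cond_false, Nat.zero_add]
    apply List.sum_eq_zero
    intro x hx
    obtain ⟨p, hp, rfl⟩ := List.mem_map.1 hx
    exact ih p.2 (sizeOf_lt_of_mem_children hp)

theorem graft_zero (S : PreTree α) : ∀ T : PreTree α, markCount T = 0 → graft S T = T := by
  intro T
  induction T using strongRecOn with
  | ih T ih =>
    intro hT
    obtain ⟨b, cs⟩ := T
    rw [markCount_node] at hT
    have hb : b = false := by
      rcases b with _ | _
      · rfl
      · simp at hT
    subst hb
    rw [graft_node, if_neg (by simp)]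
    congr 1
    conv_rhs => rw [show cs = cs.map id from (List.map_id cs).symm]
    refine List.map_congr_left ?_
    intro p hp
    have hp0 : markCount p.2 = 0 := by
      simp only [cond_false, Nat.zero_add] at hT
      have := nat_sum_map_zero hT p hp
      simpa using this
    rw [ih p.2 (sizeOf_lt_of_mem_children hp) hp0]
    rfl

theorem markCount_graft (S : PreTree α) : ∀ T : PreTree α, markCount T = 1 →
    markCount (graft S T) = markCount S := by
  intro T
  induction T using strongRecOn with
  | ih T ih =>
    intro hT
    obtain ⟨b, cs⟩ := T
    rw [markCount_node] at hT
    rw [graft_node]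
    rcases b with _ | _
    · rw [if_neg (by simp)]
      simp only [cond_false, Nat.zero_add] at hT
      rw [markCount_node, List.map_map]
      simp only [cond_false, Nat.zero_add]
      obtain ⟨q, hq, hq1, hq2⟩ := sum_map_eq_one hT
      refine sum_map_eq_single hT hq hq1 ?_ ?_
      · intro p hp hpq
        have hp0 : markCount p.2 = 0 := (hq2 p hp).resolve_right hpq
        simp only [Function.comp]
        rw [graft_zero S p.2 hp0, hp0]
      · simp only [Function.comp]
        exact ih q.2 (sizeOf_lt_of_mem_children hq) hq1
    · rw [if_pos rfl]
      simp only [cond_true] at hT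
      have hcs : ∀ p ∈ cs, markCount p.2 = 0 := by
        intro p hp
        have := nat_sum_map_zero (f := fun p => markCount p.2) (by omega) p hp
        simpa using this
      obtain ⟨bS, csS⟩ := S
      rw [markCount_node, markCount_node]
      simp only [mark, children, List.map_append, List.sum_append]
      have : (cs.map fun p => markCount p.2).sum = 0 :=
        List.sum_eq_zero (by
          intro x hx
          obtain ⟨p, hp, rfl⟩ := List.mem_map.1 hx
          exact hcs p hp)
      omega

theorem Pint_irrel {X : Type} {f : α → X → X → Prop} :
    ∀ T : PreTree α, markCount T = 0 → ∀ (x y y' : X), Pint f T x y → Pint f T x y' := by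
  intro T
  induction T using strongRecOn with
  | ih T ih =>
    intro hT x y y' hP
    obtain ⟨b, cs⟩ := T
    rw [markCount_node] at hT
    have hb : b = false := by
      cases b
      · rfl
      · exfalso
        rw [show (cond true 1 0 : ℕ) = 1 from rfl] at hT
        omega
    subst hb
    rw [Pint_node] at hP ⊢
    refine ⟨by simp, fun p hp => ?_⟩
    obtain ⟨z, hz, hPz⟩ := hP.2 p hp
    have hp0 : markCount p.2 = 0 := by
      simp only [cond_false, Nat.zero_add] at hT
      simpa using nat_sum_map_zero hT p hp
    exact ⟨z, hz, ih p.2 (sizeOf_lt_of_mem_children hp) hp0 z y y' hPz⟩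

theorem Pint_graft {X : Type} {f : α → X → X → Prop} :
    ∀ T : PreTree α, markCount T = 1 → ∀ (S : PreTree α) (x y : X),
      (Pint f (graft S T) x y ↔ ∃ z, Pint f T x z ∧ Pint f S z y) := by
  intro T
  induction T using strongRecOn with
  | ih T ih =>
    intro hT S x y
    obtain ⟨b, cs⟩ := T
    rw [markCount_node] at hT
    rw [graft_node]
    rcases b with _|_
    · -- b = false : point in a child
      rw [if_neg (by simp)]
      simp only [cond_false, Nat.zero_add] at hT
      obtain ⟨q, hq, hq1, hq2⟩ := sum_map_eq_one hT
      rw [Pint_node]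
      constructor
      · rintro ⟨-, h2⟩
        obtain ⟨z, hz, hPg⟩ := h2 (q.1, graft S q.2)
          (List.mem_map_of_mem (f := fun p : α × PreTree α => (p.1, graft S p.2)) hq)
        obtain ⟨w, hw1, hw2⟩ := (ih q.2 (sizeOf_lt_of_mem_children hq) hq1 S z y).1 hPg
        refine ⟨w, ?_, hw2⟩
        rw [Pint_node]
        refine ⟨by simp, fun p hp => ?_⟩
        rcases hq2 p hp with h0 | rfl
        · obtain ⟨z', hz', hP'⟩ := h2 (p.1, graft S p.2)
            (List.mem_map_of_mem (f := fun p : α × PreTree α => (p.1, graft S p.2)) hp)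
          rw [graft_zero S p.2 (by simpa using h0)] at hP'
          exact ⟨z', hz', Pint_irrel p.2 (by simpa using h0) z' y w hP'⟩
        · exact ⟨z, hz, hw1⟩
      · rintro ⟨w, hw, hS⟩
        rw [Pint_node] at hw
        refine ⟨by simp, fun p' hp' => ?_⟩
        obtain ⟨p, hp, rfl⟩ := List.mem_map.1 hp'
        obtain ⟨z, hz, hPz⟩ := hw.2 p hp
        rcases hq2 p hp with h0 | rfl
        · rw [graft_zero S p.2 (by simpa using h0)]
          exact ⟨z, hz, Pint_irrel p.2 (by simpa using h0) z w y hPz⟩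
        · exact ⟨z, hz, (ih p.2 (sizeOf_lt_of_mem_children hp) hq1 S z y).2 ⟨w, hPz, hS⟩⟩
    · -- b = true : point at root
      rw [if_pos rfl]
      simp only [cond_true] at hT
      have hcs : ∀ p ∈ cs, markCount p.2 = 0 := by
        intro p hp
        simpa using nat_sum_map_zero (f := fun p => markCount p.2) (by omega) p hp
      obtain ⟨bS, csS⟩ := S
      simp only [mark, children]
      rw [Pint_node]
      constructor
      · rintro ⟨h1, h2⟩
        refine ⟨x, ?_, ?_⟩
        · rw [Pint_node]
          refine ⟨fun _ => rfl, fun p hp => ?_⟩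
          obtain ⟨z, hz, hPz⟩ := h2 p (List.mem_append_left _ hp)
          exact ⟨z, hz, Pint_irrel p.2 (hcs p hp) z y x hPz⟩
        · rw [Pint_node]
          exact ⟨h1, fun p hp => h2 p (List.mem_append_right _ hp)⟩
      · rintro ⟨z, hz, hS⟩
        rw [Pint_node] at hz hS
        have hzx : x = z := hz.1 rfl
        subst hzx
        refine ⟨hS.1, fun p hp => ?_⟩
        rcases List.mem_append.1 hp with h | h
        · obtain ⟨z', hz', hPz⟩ := hz.2 p h
          exact ⟨z', hz', Pint_irrel p.2 (hcs p h) z' x y hPz⟩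
        · exact hS.2 p h

theorem Pint_unmark {X : Type} {f : α → X → X → Prop} :
    ∀ T : PreTree α, markCount T ≤ 1 → ∀ (x y : X),
      (Pint f (unmark T) x y ↔ ∃ z, Pint f T x z) := by
  intro T
  induction T using strongRecOn with
  | ih T ih =>
    intro hT x y
    obtain ⟨b, cs⟩ := T
    rw [markCount_node] at hT
    rw [unmark_node, Pint_node]
    constructor
    · rintro ⟨-, h2⟩
      have key : ∀ p ∈ cs, ∃ z, f p.1 x z ∧ ∃ w, Pint f p.2 z w := by
        intro p hp
        have hple : markCount p.2 ≤ 1 := by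
          have : markCount p.2 ≤ (cs.map fun p => markCount p.2).sum := by
            simpa using nat_mem_map_le_sum (f := fun p => markCount p.2) hp
          rcases b with _|_ <;> simp at hT <;> omega
        obtain ⟨z, hz, hPu⟩ := h2 (p.1, unmark p.2)
          (List.mem_map_of_mem (f := fun p : α × PreTree α => (p.1, unmark p.2)) hp)
        exact ⟨z, hz, (ih p.2 (sizeOf_lt_of_mem_children hp) hple z y).1 hPu⟩
      rcases b with _|_
      · simp only [cond_false, Nat.zero_add] at hT
        rcases Nat.eq_zero_or_pos ((cs.map fun p => markCount p.2).sum) with hz0 | hpos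
        · -- no point anywhere: any z works; use x
          refine ⟨x, ?_⟩
          rw [Pint_node]
          refine ⟨by simp, fun p hp => ?_⟩
          obtain ⟨z, hz, w, hw⟩ := key p hp
          have hp0 : markCount p.2 = 0 := by simpa using nat_sum_map_zero hz0 p hp
          exact ⟨z, hz, Pint_irrel p.2 hp0 z w x hw⟩
        · have hs1 : ((cs.map fun p => markCount p.2).sum) = 1 := by omega
          obtain ⟨q, hq, hq1, hq2⟩ := sum_map_eq_one hs1
          obtain ⟨z, hz, w, hw⟩ := key q hq
          refine ⟨w, ?_⟩
          rw [Pint_node]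
          refine ⟨by simp, fun p hp => ?_⟩
          rcases hq2 p hp with h0 | rfl
          · obtain ⟨z', hz', w', hw'⟩ := key p hp
            exact ⟨z', hz', Pint_irrel p.2 (by simpa using h0) z' w' w hw'⟩
          · exact ⟨z, hz, hw⟩
      · -- b = true : point at root
        simp only [cond_true] at hT
        refine ⟨x, ?_⟩
        rw [Pint_node]
        refine ⟨fun _ => rfl, fun p hp => ?_⟩
        obtain ⟨z, hz, w, hw⟩ := key p hp
        have hp0 : markCount p.2 = 0 := by
          have : ((cs.map fun p => markCount p.2).sum) = 0 := by omega
          simpa using nat_sum_map_zero this p hp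
        exact ⟨z, hz, Pint_irrel p.2 hp0 z w x hw⟩
    · rintro ⟨w, hw⟩
      rw [Pint_node] at hw
      refine ⟨by simp, fun p' hp' => ?_⟩
      obtain ⟨p, hp, rfl⟩ := List.mem_map.1 hp'
      obtain ⟨z, hz, hPz⟩ := hw.2 p hp
      have hple : markCount p.2 ≤ 1 := by
        have : markCount p.2 ≤ (cs.map fun p => markCount p.2).sum := by
          simpa using nat_mem_map_le_sum (f := fun p => markCount p.2) hp
        rcases b with _|_ <;> simp at hT <;> omega
      exact ⟨z, hz, (ih p.2 (sizeOf_lt_of_mem_children hp) hple z y).2 ⟨w, hPz⟩⟩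

theorem eqv_node {b₁ b₂ : Bool} {c₁ c₂ : List (α × PreTree α)} :
    eqv (node b₁ c₁) (node b₂ c₂) ↔
      (b₁ = b₂ ∧
      (∀ p, p ∈ c₁ → ∃ q, q ∈ c₂ ∧ p.1 = q.1 ∧ eqv p.2 q.2) ∧
      (∀ q, q ∈ c₂ → ∃ p : {x // x ∈ c₁}, p.1.1 = q.1 ∧ eqv p.1.2 q.2)) := by
  rw [eqv]

theorem Pint_eqv {X : Type} {f : α → X → X → Prop} :
    ∀ T S : PreTree α, eqv T S → ∀ (x y : X), (Pint f T x y ↔ Pint f S x y) := by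
  intro T
  induction T using strongRecOn with
  | ih T ih =>
    intro S heqv x y
    obtain ⟨b₁, c₁⟩ := T; obtain ⟨b₂, c₂⟩ := S
    rw [eqv_node] at heqv
    obtain ⟨hb, hfwd, hbwd⟩ := heqv
    rw [Pint_node, Pint_node]
    constructor
    · rintro ⟨h1, h2⟩
      refine ⟨by rw [← hb]; exact h1, fun q hq => ?_⟩
      obtain ⟨p, hp1, hp2⟩ := hbwd q hq
      obtain ⟨z, hz, hPz⟩ := h2 p.1 p.2
      exact ⟨z, hp1 ▸ hz, (ih p.1.2 (sizeOf_lt_of_mem_children p.2) q.2 hp2 z y).1 hPz⟩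
    · rintro ⟨h1, h2⟩
      refine ⟨by rw [hb]; exact h1, fun p hp => ?_⟩
      obtain ⟨q, hq, hq1, hq2⟩ := hfwd p hp
      obtain ⟨z, hz, hPz⟩ := h2 q hq
      exact ⟨z, hq1 ▸ hz, (ih p.2 (sizeOf_lt_of_mem_children hp) q.2 hq2 z y).2 hPz⟩

end PreTree

namespace FreeKAD
open PreTree

variable {α : Type}

theorem markCount_interp1 : ∀ s : Term1 α, markCount (interp1 s) = 1 := by
  intro s
  induction s with
  | var a =>
    show markCount (arrow a) = 1
    rw [arrow, markCount_node]
    simp [markCount_node]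
  | one =>
    show markCount (trivialTree : PreTree α) = 1
    rw [trivialTree, markCount_node]
    simp
  | comp s t ihs iht =>
    show markCount (concat (interp1 s) (interp1 t)) = 1
    rw [concat]
    rw [markCount_reduce _ (by rw [markCount_graft _ _ ihs]; omega)]
    rw [markCount_graft _ _ ihs, iht]
  | dom s ihs =>
    show markCount (domTree (interp1 s)) = 1
    rw [domTree]
    have hpt : markCount (pointAtRoot (interp1 s)) = 1 := by
      obtain ⟨b, cs, hbc⟩ : ∃ b cs, interp1 s = node b cs := by
        cases h' : interp1 s with | node b cs => exact ⟨b, cs, rfl⟩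
      rw [hbc, pointAtRoot, unmark_node, children, markCount_node]
      have h0 := markCount_unmark (node b cs)
      rw [unmark_node, markCount_node] at h0
      simp only [cond_false, Nat.zero_add, cond_true] at h0 ⊢
      omega
    rw [markCount_reduce _ (by omega), hpt]

theorem rinterp1_iff {X : Type} (f : α → X → X → Prop) :
    ∀ (s : Term1 α) (x y : X), rinterp1 f s x y ↔ Pint f (interp1 s) x y := by
  intro s
  induction s with
  | var a =>
    intro x y
    show f a x y ↔ Pint f (arrow a) x y
    rw [arrow, Pint_node]
    constructor
    · intro h
      refine ⟨by simp, fun p hp => ?_⟩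
      rcases List.mem_singleton.1 hp with rfl
      exact ⟨y, h, by rw [Pint_node]; exact ⟨fun _ => rfl, by simp⟩⟩
    · rintro ⟨-, h2⟩
      obtain ⟨z, hz, hPz⟩ := h2 (a, node true []) (List.mem_singleton_self _)
      rw [Pint_node] at hPz
      rwa [← hPz.1 rfl]
  | one =>
    intro x y
    show x = y ↔ Pint f (trivialTree : PreTree α) x y
    rw [trivialTree, Pint_node]
    constructor
    · intro h; exact ⟨fun _ => h, by simp⟩
    · intro h; exact h.1 rfl
  | comp s t ihs iht =>
    intro x y
    show (∃ z, rinterp1 f s x z ∧ rinterp1 f t z y) ↔ Pint f (concat (interp1 s) (interp1 t)) x y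
    rw [concat, Pint_reduce, Pint_graft (interp1 s) (markCount_interp1 s)]
    constructor
    · rintro ⟨z, h1, h2⟩
      exact ⟨z, (ihs x z).1 h1, (iht z y).1 h2⟩
    · rintro ⟨z, h1, h2⟩
      exact ⟨z, (ihs x z).2 h1, (iht z y).2 h2⟩
  | dom s ihs =>
    intro x y
    show (x = y ∧ ∃ z, rinterp1 f s x z) ↔ Pint f (domTree (interp1 s)) x y
    rw [domTree, Pint_reduce]
    have hmc : markCount (interp1 s) ≤ 1 := by rw [markCount_interp1 s]
    obtain ⟨b, cs, hbc⟩ : ∃ b cs, interp1 s = node b cs := by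
      cases h' : interp1 s with | node b cs => exact ⟨b, cs, rfl⟩
    rw [hbc] at hmc ⊢
    rw [pointAtRoot, unmark_node, children, Pint_node]
    have hun : ∀ (x y : X), Pint f (node false (cs.map fun p => (p.1, unmark p.2))) x y ↔
        ∃ z, Pint f (node b cs) x z := by
      intro x y
      rw [← unmark_node]
      exact Pint_unmark (node b cs) hmc x y
    constructor
    · rintro ⟨rfl, z, hz⟩
      have hz' : Pint f (node b cs) x z := by rw [← hbc]; exact (ihs x z).1 hz
      have h3 : Pint f (node false (cs.map fun p => (p.1, unmark p.2))) x x :=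
        (hun x x).2 ⟨z, hz'⟩
      rw [Pint_node] at h3
      exact ⟨fun _ => rfl, h3.2⟩
    · intro h
      refine ⟨h.1 rfl, ?_⟩
      have h3 : Pint f (node false (cs.map fun p => (p.1, unmark p.2))) x y := by
        rw [Pint_node]; exact ⟨by simp, h.2⟩
      obtain ⟨z, hz⟩ := (hun x y).1 h3
      refine ⟨z, (ihs x z).2 ?_⟩
      rw [hbc]; exact hz

end FreeKAD

namespace FreeKAD
open PreTree

/-- Soundness with respect to relations for the signature
`{∘, 1, D}`: if `⟨s⟩ = ⟨t⟩` (equality of trees, whose children collections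
are sets, is `eqv`), then for every set `X` and every assignment `f` of
binary relations on `X` to the variables, the relational interpretations of
`s` and `t` under `f` coincide. -/
theorem soundness_comp_one_dom {α : Type} (s t : Term1 α)
    (h : eqv (interp1 s) (interp1 t)) :
    ∀ (X : Type) (f : α → X → X → Prop), rinterp1 f s = rinterp1 f t := by
  intro X f
  funext x y
  exact propext ((rinterp1_iff f s x y).trans
    ((Pint_eqv _ _ h x y).trans (rinterp1_iff f t x y).symm))

end FreeKAD
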